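/- If sin∠(u_i, w_i) denotes the sine of the acute angle between the i-th blocks of block vectors u, w ∈ ℂ^{dn}, and ‖u_i‖₂ = ‖w_i‖₂ = 1, then sin²∠(u,w) ≥ sin²∠(u_i,w_i)/‖u‖₂², i.e., sin∠(u_i,w_i) ≤ ‖u‖₂ sin∠(u,w). -/

import Mathlib

open scoped BigOperators

/-- Euclidean norm of a finite complex vector. -/
noncomputable def cenorm {ι : Type*} [Fintype ι] (v : ι → ℂ) : ℝ :=
  Real.sqrt (∑ i, ‖v i‖ ^ 2)

/-- Standard Hermitian inner product `w* u` (conjugate-linear in `w`). -/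
noncomputable def cinner {ι : Type*} [Fintype ι] (w v : ι → ℂ) : ℂ :=
  ∑ i, (starRingEnd ℂ) (w i) * v i

/-- Sine of the acute angle between two vectors. -/
noncomputable def sinAngle {ι : Type*} [Fintype ι] (u w : ι → ℂ) : ℝ :=
  Real.sqrt (1 - ‖cinner w u‖ ^ 2 / (cenorm u ^ 2 * cenorm w ^ 2))

lemma cenorm_eq_norm {ι : Type*} [Fintype ι] (v : ι → ℂ) :
    cenorm v = ‖(WithLp.equiv 2 (ι → ℂ)).symm v‖ := by
  rw [EuclideanSpace.norm_eq]
  simp [cenorm]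

lemma cinner_eq_inner {ι : Type*} [Fintype ι] (w v : ι → ℂ) :
    cinner w v =
      @inner ℂ _ _ ((WithLp.equiv 2 (ι → ℂ)).symm w) ((WithLp.equiv 2 (ι → ℂ)).symm v) := by
  rw [PiLp.inner_apply]
  simp [cinner, RCLike.inner_apply]
  exact Finset.sum_congr rfl fun _ _ => mul_comm _ _

/-- Blockwise Cauchy–Schwarz. -/
lemma cs_block {ι : Type*} [Fintype ι] (v w : ι → ℂ) :
    ‖cinner w v‖ ≤ cenorm v * cenorm w := by
  rw [cinner_eq_inner, cenorm_eq_norm, cenorm_eq_norm, mul_comm]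
  exact norm_inner_le_norm _ _

lemma cenorm_nonneg' {ι : Type*} [Fintype ι] (v : ι → ℂ) : 0 ≤ cenorm v := Real.sqrt_nonneg _

lemma cenorm_sq {ι : Type*} [Fintype ι] (v : ι → ℂ) :
    cenorm v ^ 2 = ∑ i, ‖v i‖ ^ 2 := by
  rw [cenorm, Real.sq_sqrt]
  positivity

lemma key_ineq (a b ci c : ℝ) (ha : 1 ≤ a) (hb : 1 ≤ b)
    (hc : 0 ≤ c) (hcle : c ≤ ci + Real.sqrt ((a-1)*(b-1))) :
    c^2 ≤ b*(a - 1 + ci^2) := by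
  set sa := Real.sqrt (a-1) with hsa
  set sb := Real.sqrt (b-1) with hsb
  have h1 : sa^2 = a - 1 := Real.sq_sqrt (by linarith)
  have h2 : sb^2 = b - 1 := Real.sq_sqrt (by linarith)
  have h3 : Real.sqrt ((a-1)*(b-1)) = sa * sb := Real.sqrt_mul (by linarith) _
  have hsa0 : 0 ≤ sa := Real.sqrt_nonneg _
  have hsb0 : 0 ≤ sb := Real.sqrt_nonneg _
  rw [h3] at hcle
  nlinarith [sq_nonneg (sa - ci * sb), sq_nonneg (c - ci - sa*sb), mul_nonneg hsa0 hsb0]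

/-- For block vectors `u, w ∈ ℂ^{dn}` with `‖u_i‖ = ‖w_i‖ = 1`,
`sin²∠(u,w) ≥ sin²∠(u_i,w_i)/‖u‖²`, i.e. `sin∠(u_i,w_i) ≤ ‖u‖ sin∠(u,w)`. -/
theorem stmt3 {d n : ℕ} (u w : Fin d → Fin n → ℂ) (i : Fin d)
    (hui : cenorm (u i) = 1) (hwi : cenorm (w i) = 1) :
    sinAngle (fun p : Fin d × Fin n => u p.1 p.2)
        (fun p : Fin d × Fin n => w p.1 p.2) ^ 2
      ≥ sinAngle (u i) (w i) ^ 2 / (cenorm fun p : Fin d × Fin n => u p.1 p.2) ^ 2 ∧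
    sinAngle (u i) (w i) ≤
      (cenorm fun p : Fin d × Fin n => u p.1 p.2) *
        sinAngle (fun p : Fin d × Fin n => u p.1 p.2)
          (fun p : Fin d × Fin n => w p.1 p.2) := by
  set U : Fin d × Fin n → ℂ := fun p => u p.1 p.2 with hU
  set W : Fin d × Fin n → ℂ := fun p => w p.1 p.2 with hW
  set A : ℝ := cenorm U ^ 2 with hA
  set B : ℝ := cenorm W ^ 2 with hB
  set C : ℝ := ‖cinner W U‖ with hC
  set ci : ℝ := ‖cinner (w i) (u i)‖ with hci
  -- block decompositions
  have hAsum : A = ∑ j, cenorm (u j) ^ 2 := by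
    rw [hA, cenorm_sq, Fintype.sum_prod_type]
    exact Finset.sum_congr rfl fun j _ => (cenorm_sq (u j)).symm
  have hBsum : B = ∑ j, cenorm (w j) ^ 2 := by
    rw [hB, cenorm_sq, Fintype.sum_prod_type]
    exact Finset.sum_congr rfl fun j _ => (cenorm_sq (w j)).symm
  have hA1 : 1 ≤ A := by
    rw [hAsum]
    have := Finset.single_le_sum (f := fun j => cenorm (u j) ^ 2)
      (fun j _ => by positivity) (Finset.mem_univ i)
    simpa [hui] using this
  have hB1 : 1 ≤ B := by
    rw [hBsum]
    have := Finset.single_le_sum (f := fun j => cenorm (w j) ^ 2)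
      (fun j _ => by positivity) (Finset.mem_univ i)
    simpa [hwi] using this
  have hA0 : (0:ℝ) < A := by linarith
  have hB0 : (0:ℝ) < B := by linarith
  have hci0 : 0 ≤ ci := norm_nonneg _
  have hci1 : ci ≤ 1 := by
    have := cs_block (u i) (w i)
    rw [hui, hwi] at this; simpa using this
  -- bound on C
  have hcinsum : cinner W U = ∑ j, cinner (w j) (u j) := by
    rw [cinner, Fintype.sum_prod_type]; rfl
  have hCsum : C ≤ ∑ j, ‖cinner (w j) (u j)‖ := by
    rw [hC, hcinsum]; exact norm_sum_le _ _
  have herase_u : ∑ j ∈ Finset.univ.erase i, cenorm (u j) ^ 2 = A - 1 := by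
    rw [Finset.sum_erase_eq_sub (Finset.mem_univ i), ← hAsum, hui]; norm_num
  have herase_w : ∑ j ∈ Finset.univ.erase i, cenorm (w j) ^ 2 = B - 1 := by
    rw [Finset.sum_erase_eq_sub (Finset.mem_univ i), ← hBsum, hwi]; norm_num
  have hrest : ∑ j ∈ Finset.univ.erase i, ‖cinner (w j) (u j)‖
      ≤ Real.sqrt ((A - 1) * (B - 1)) := by
    have h1 : ∑ j ∈ Finset.univ.erase i, ‖cinner (w j) (u j)‖
        ≤ ∑ j ∈ Finset.univ.erase i, cenorm (u j) * cenorm (w j) :=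
      Finset.sum_le_sum fun j _ => cs_block (u j) (w j)
    have h2 : (∑ j ∈ Finset.univ.erase i, cenorm (u j) * cenorm (w j)) ^ 2
        ≤ (A - 1) * (B - 1) := by
      rw [← herase_u, ← herase_w]
      exact Finset.sum_mul_sq_le_sq_mul_sq _ _ _
    have h3 : ∑ j ∈ Finset.univ.erase i, cenorm (u j) * cenorm (w j)
        ≤ Real.sqrt ((A - 1) * (B - 1)) := by
      have hnn : 0 ≤ ∑ j ∈ Finset.univ.erase i, cenorm (u j) * cenorm (w j) :=
        Finset.sum_nonneg fun j _ => mul_nonneg (cenorm_nonneg' _) (cenorm_nonneg' _)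
      calc ∑ j ∈ Finset.univ.erase i, cenorm (u j) * cenorm (w j)
          = Real.sqrt ((∑ j ∈ Finset.univ.erase i, cenorm (u j) * cenorm (w j))^2) :=
            (Real.sqrt_sq hnn).symm
        _ ≤ Real.sqrt ((A - 1) * (B - 1)) := Real.sqrt_le_sqrt h2
    linarith
  have hCle : C ≤ ci + Real.sqrt ((A - 1) * (B - 1)) := by
    have hsplit : ∑ j, ‖cinner (w j) (u j)‖
        = ci + ∑ j ∈ Finset.univ.erase i, ‖cinner (w j) (u j)‖ := by
      exact (Finset.add_sum_erase _ _ (Finset.mem_univ i)).symm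
    rw [hsplit] at hCsum
    linarith
  have hC0 : 0 ≤ C := norm_nonneg _
  have hC2 : C ^ 2 ≤ B * (A - 1 + ci ^ 2) := key_ineq A B ci C hA1 hB1 hC0 hCle
  -- sine formulas
  have hssmall : sinAngle (u i) (w i) ^ 2 = 1 - ci ^ 2 := by
    rw [sinAngle, hui, hwi, Real.sq_sqrt (by nlinarith)]
    norm_num; rw [← hci]
  have hABpos : (0:ℝ) < A * B := mul_pos hA0 hB0
  have hfrac : C ^ 2 / (A * B) ≤ 1 := by
    rw [div_le_one hABpos]; nlinarith
  have hSbig : sinAngle U W ^ 2 = 1 - C ^ 2 / (A * B) := by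
    rw [sinAngle, ← hA, ← hB, ← hC, Real.sq_sqrt (by linarith)]
  -- main inequality
  have h1 : (1 - ci ^ 2) / A ≤ 1 - C ^ 2 / (A * B) := by
    have heq : 1 - C ^ 2 / (A * B) = (A * B - C ^ 2) / (A * B) := by
      field_simp
    rw [heq, div_le_div_iff₀ hA0 hABpos]
    nlinarith [mul_le_mul_of_nonneg_right hC2 hA0.le]
  constructor
  · rw [ge_iff_le, hssmall, hSbig]
    exact h1
  · have hcenormU : cenorm U = Real.sqrt A := by
      rw [hA, Real.sqrt_sq (cenorm_nonneg' U)]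
    have hsin_i : sinAngle (u i) (w i) = Real.sqrt (1 - ci ^ 2) := by
      rw [sinAngle, hui, hwi]; norm_num; rw [← hci]
    have hsin_UW : sinAngle U W = Real.sqrt (1 - C ^ 2 / (A * B)) := by
      rw [sinAngle, ← hA, ← hB, ← hC]
    rw [hsin_i, hcenormU, hsin_UW, ← Real.sqrt_mul hA0.le]
    apply Real.sqrt_le_sqrt
    have := (div_le_iff₀ hA0).mp h1
    linarith [this]
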